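/- For λ = v₃/2 > 0, the function θ(s) = 2 arctan(v₃ s) satisfies θ'(s) = 2λ + v₃ cos θ(s) = v₃(1 + cos θ(s)) for all s ∈ ℝ, and the curve α(s) = ( −s + (2/v₃) arctan(v₃ s), (1/v₃) log(1 + s²v₃²) ) satisfies α'(s) = (cos θ(s), sin θ(s)). -/

import Mathlib

lemma cos_aux (x : ℝ) : Real.cos (2 * Real.arctan x) = (1 - x^2) / (1 + x^2) := by
  have h : (0:ℝ) < 1 + x^2 := by positivity
  rw [Real.cos_two_mul, Real.cos_arctan]
  rw [div_pow, one_pow, Real.sq_sqrt h.le]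
  field_simp
  ring

lemma sin_aux (x : ℝ) : Real.sin (2 * Real.arctan x) = 2 * x / (1 + x^2) := by
  have h : (0:ℝ) < 1 + x^2 := by positivity
  rw [Real.sin_two_mul, Real.sin_arctan, Real.cos_arctan]
  have hs : Real.sqrt (1+x^2) * Real.sqrt (1+x^2) = 1+x^2 := Real.mul_self_sqrt h.le
  have hne : Real.sqrt (1+x^2) ≠ 0 := by positivity
  field_simp
  rw [Real.sq_sqrt h.le]

/-- For `λ = v₃/2 > 0`, the function `θ(s) = 2 arctan(v₃ s)` satisfies
`θ' = 2λ + v₃ cos θ = v₃ (1 + cos θ)` on `ℝ`, and the curve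
`α(s) = (-s + (2/v₃) arctan(v₃ s), (1/v₃) log(1 + s²v₃²))` satisfies
`α'(s) = (cos θ(s), sin θ(s))`. -/
theorem stmt10 (v₃ : ℝ) (hv : 0 < v₃) (θ : ℝ → ℝ)
    (hθdef : ∀ s, θ s = 2 * Real.arctan (v₃ * s)) :
    (∀ s, HasDerivAt θ (v₃ * (1 + Real.cos (θ s))) s) ∧
    (∀ s, v₃ * (1 + Real.cos (θ s)) = 2 * (v₃/2) + v₃ * Real.cos (θ s)) ∧
    (∀ s : ℝ, HasDerivAt (fun u => -u + (2/v₃) * Real.arctan (v₃ * u))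
      (Real.cos (θ s)) s) ∧
    (∀ s : ℝ, HasDerivAt (fun u => (1/v₃) * Real.log (1 + u^2 * v₃^2))
      (Real.sin (θ s)) s) := by
  have hpos : ∀ s : ℝ, (0:ℝ) < 1 + (v₃ * s)^2 := fun s => by positivity
  have hcos : ∀ s : ℝ, Real.cos (θ s) = (1 - (v₃*s)^2) / (1 + (v₃*s)^2) := by
    intro s; rw [hθdef s, cos_aux]
  have hsin : ∀ s : ℝ, Real.sin (θ s) = 2 * (v₃*s) / (1 + (v₃*s)^2) := by
    intro s; rw [hθdef s, sin_aux]
  have harctan : ∀ s : ℝ, HasDerivAt (fun u => Real.arctan (v₃ * u))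
      (v₃ / (1 + (v₃*s)^2)) s := by
    intro s
    have h1 : HasDerivAt (fun u : ℝ => v₃ * u) v₃ s := by
      simpa using (hasDerivAt_id s).const_mul v₃
    have h2 := (Real.hasDerivAt_arctan (v₃ * s)).comp s h1
    refine h2.congr_deriv ?_
    ring
  refine ⟨?_, ?_, ?_, ?_⟩
  · intro s
    have h := (harctan s).const_mul 2
    have heq : (fun u => 2 * Real.arctan (v₃ * u)) = θ := by
      funext u; rw [hθdef u]
    rw [heq] at h
    refine h.congr_deriv ?_
    rw [hcos s]
    field_simp
    ring
  · intro s; ring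
  · intro s
    have h := ((hasDerivAt_id s).neg).add ((harctan s).const_mul (2/v₃))
    refine h.congr_deriv ?_
    rw [hcos s]
    field_simp
    ring
  · intro s
    have hlin : HasDerivAt (fun u : ℝ => 1 + u^2 * v₃^2) (2*s*v₃^2) s := by
      have := ((hasDerivAt_pow 2 s).mul_const (v₃^2)).const_add 1
      simpa [mul_comm, mul_assoc] using this
    have hne : (1 + s^2 * v₃^2) ≠ 0 := by positivity
    have h := (Real.hasDerivAt_log hne).comp s hlin
    have h2 := h.const_mul (1/v₃)
    refine h2.congr_deriv ?_
    rw [hsin s]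
    field_simp
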